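/- Let C = (a_{ij}) be the 3×3 matrix with a_{ij} = α_i(b_j), let γ_i denote the i-th row of C regarded as a linear functional on ℝ³, let e₁,e₂,e₃ be the standard basis of ℝ³, and set τ_i = e_i⊗γ_i − 1. Then the closures in (M₃(ℝ))³ of the two conjugation orbits {(gσ₁g⁻¹, gσ₂g⁻¹, gσ₃g⁻¹) : g ∈ GL(3,ℝ)} and {(gτ₁g⁻¹, gτ₂g⁻¹, gτ₃g⁻¹) : g ∈ GL(3,ℝ)} have nonempty intersection. -/

import Mathlib

open Matrix Filter Topology

lemma exists_linearEquiv_comp_eq {V : Type*} [AddCommGroup V] [Module ℝ V]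
    [FiniteDimensional ℝ V] (f g : V →ₗ[ℝ] V) (h : LinearMap.ker f = LinearMap.ker g) :
    ∃ e : V ≃ₗ[ℝ] V, ∀ x, e (f x) = g x := by
  obtain ⟨Cf, hCf⟩ := (LinearMap.range f).exists_isCompl
  obtain ⟨Cg, hCg⟩ := (LinearMap.range g).exists_isCompl
  have hrank : Module.finrank ℝ (LinearMap.range f) = Module.finrank ℝ (LinearMap.range g) := by
    have h1 := LinearMap.finrank_range_add_finrank_ker f
    have h2 := LinearMap.finrank_range_add_finrank_ker g
    rw [h] at h1
    omega
  have hCrank : Module.finrank ℝ Cf = Module.finrank ℝ Cg := by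
    have h1 := Submodule.finrank_add_eq_of_isCompl hCf
    have h2 := Submodule.finrank_add_eq_of_isCompl hCg
    omega
  obtain ⟨ψ⟩ := FiniteDimensional.nonempty_linearEquiv_of_finrank_eq hCrank
  set φ : (LinearMap.range f : Submodule ℝ V) ≃ₗ[ℝ] (LinearMap.range g : Submodule ℝ V) :=
    f.quotKerEquivRange.symm ≪≫ₗ Submodule.quotEquivOfEq _ _ h ≪≫ₗ g.quotKerEquivRange with hφ
  refine ⟨(Submodule.prodEquivOfIsCompl _ _ hCf).symm ≪≫ₗ ((LinearEquiv.prodCongr φ ψ)) ≪≫ₗ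
    Submodule.prodEquivOfIsCompl _ _ hCg, fun x => ?_⟩
  simp only [LinearEquiv.trans_apply]
  have hx : f x = ((⟨f x, LinearMap.mem_range_self f x⟩ : LinearMap.range f) : V) := rfl
  rw [hx, Submodule.prodEquivOfIsCompl_symm_apply_left]
  have hφx : φ ⟨f x, LinearMap.mem_range_self f x⟩ =
      ⟨g x, LinearMap.mem_range_self g x⟩ := by
    rw [hφ]
    simp only [LinearEquiv.trans_apply]
    rw [LinearMap.quotKerEquivRange_symm_apply_image f x (LinearMap.mem_range_self f x)]
    rw [show ((LinearMap.ker f).quotEquivOfEq (LinearMap.ker g) h) ((LinearMap.ker f).mkQ x) =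
        ((LinearMap.ker g).mkQ x) from rfl]
    ext
    exact g.quotKerEquivRange_apply_mk x
  have hprod : ((LinearEquiv.prodCongr φ ψ)) (⟨f x, LinearMap.mem_range_self f x⟩, 0) =
      (⟨g x, LinearMap.mem_range_self g x⟩, 0) := by
    simp [LinearEquiv.prodCongr_apply, hφx]
  rw [hprod, Submodule.coe_prodEquivOfIsCompl']
  simp

lemma tendsto_diagonal_mat {l : Filter ℝ} {φ : ℝ → Fin 3 → ℝ} {φ0 : Fin 3 → ℝ}
    (h : ∀ j, Tendsto (fun s => φ s j) l (𝓝 (φ0 j))) :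
    Tendsto (fun s => (Matrix.diagonal (φ s) : Matrix (Fin 3) (Fin 3) ℝ)) l
      (𝓝 (Matrix.diagonal φ0)) := by
  refine tendsto_pi_nhds.2 fun i => tendsto_pi_nhds.2 fun j => ?_
  by_cases hij : i = j
  · subst hij
    simpa only [Matrix.diagonal_apply_eq] using h i
  · simpa only [Matrix.diagonal_apply_ne _ hij] using tendsto_const_nhds


set_option maxHeartbeats 1000000 in
/-- For `σᵢ = bᵢ⊗αᵢ − 1` (with `αᵢ(bᵢ) = 2`), let `C = (a i j)` with
`a i j = αᵢ(b_j)`, and let `τᵢ = eᵢ⊗γᵢ − 1` where `γᵢ` is the `i`-th row of `C`. Then the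
closures in `M₃(ℝ)³` of the `GL(3,ℝ)`-conjugation orbits of `(σ₁,σ₂,σ₃)` and `(τ₁,τ₂,τ₃)`
intersect. -/
theorem conjugation_orbit_closures_intersect
    (b α : Fin 3 → Fin 3 → ℝ) (h2 : ∀ i, (∑ k, α i k * b i k) = 2)
    (σ τ : Fin 3 → Matrix (Fin 3) (Fin 3) ℝ)
    (hσ : ∀ i, σ i = Matrix.vecMulVec (b i) (α i) - 1)
    (hτ : ∀ i, τ i = Matrix.vecMulVec (fun j => if j = i then 1 else 0)
        (fun j => ∑ k, α i k * b j k) - 1) :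
    (closure {x : Matrix (Fin 3) (Fin 3) ℝ × Matrix (Fin 3) (Fin 3) ℝ ×
          Matrix (Fin 3) (Fin 3) ℝ |
        ∃ g : GL (Fin 3) ℝ,
          x = ((g : Matrix (Fin 3) (Fin 3) ℝ) * σ 0 * ((g⁻¹ : GL (Fin 3) ℝ) : Matrix (Fin 3) (Fin 3) ℝ),
               (g : Matrix (Fin 3) (Fin 3) ℝ) * σ 1 * ((g⁻¹ : GL (Fin 3) ℝ) : Matrix (Fin 3) (Fin 3) ℝ),
               (g : Matrix (Fin 3) (Fin 3) ℝ) * σ 2 * ((g⁻¹ : GL (Fin 3) ℝ) : Matrix (Fin 3) (Fin 3) ℝ))} ∩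
      closure {x : Matrix (Fin 3) (Fin 3) ℝ × Matrix (Fin 3) (Fin 3) ℝ ×
          Matrix (Fin 3) (Fin 3) ℝ |
        ∃ g : GL (Fin 3) ℝ,
          x = ((g : Matrix (Fin 3) (Fin 3) ℝ) * τ 0 * ((g⁻¹ : GL (Fin 3) ℝ) : Matrix (Fin 3) (Fin 3) ℝ),
               (g : Matrix (Fin 3) (Fin 3) ℝ) * τ 1 * ((g⁻¹ : GL (Fin 3) ℝ) : Matrix (Fin 3) (Fin 3) ℝ),
               (g : Matrix (Fin 3) (Fin 3) ℝ) * τ 2 * ((g⁻¹ : GL (Fin 3) ℝ) : Matrix (Fin 3) (Fin 3) ℝ))}).Nonempty := by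
  classical
  -- matrices A (rows αᵢ), B (columns bⱼ), Xᵢ
  set A : Matrix (Fin 3) (Fin 3) ℝ := Matrix.of α with hA
  set B : Matrix (Fin 3) (Fin 3) ℝ := Matrix.of (fun k j => b j k) with hB
  set X : Fin 3 → Matrix (Fin 3) (Fin 3) ℝ :=
    fun i => Matrix.of (fun p q => if p = i then α i q else 0) with hX
  have hσ' : ∀ i, σ i = B * X i - 1 := by
    intro i
    rw [hσ i]
    congr 1
    ext p q
    simp [hX, hB, Matrix.mul_apply, Matrix.vecMulVec_apply, mul_ite, ite_mul]
  have hτ' : ∀ i, τ i = X i * B - 1 := by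
    intro i
    rw [hτ i]
    congr 1
    ext p q
    by_cases hpi : p = i <;>
      simp [hX, hB, Matrix.mul_apply, Matrix.vecMulVec_apply, hpi]
  -- N = Bᴴ * B and spectral data
  set N : Matrix (Fin 3) (Fin 3) ℝ := Bᴴ * B with hNdef
  have hps : N.PosSemidef := Matrix.posSemidef_conjTranspose_mul_self B
  have hN : N.IsHermitian := hps.1
  set U : Matrix (Fin 3) (Fin 3) ℝ := (hN.eigenvectorUnitary : Matrix (Fin 3) (Fin 3) ℝ) with hU
  set W : Matrix (Fin 3) (Fin 3) ℝ := star (hN.eigenvectorUnitary : Matrix (Fin 3) (Fin 3) ℝ) with hW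
  have hUW : U * W = 1 := by
    rw [hU, hW]
    exact Matrix.mem_unitaryGroup_iff.mp hN.eigenvectorUnitary.2
  have hWU : W * U = 1 := by
    rw [hU, hW]
    exact Matrix.mem_unitaryGroup_iff'.mp hN.eigenvectorUnitary.2
  set d : Fin 3 → ℝ := hN.eigenvalues with hd
  have hd0 : ∀ j, 0 ≤ d j := fun j => hps.eigenvalues_nonneg j
  have hspec : N = U * Matrix.diagonal d * W := by
    have h := hN.spectral_theorem
    rwa [RCLike.ofReal_real_eq_id, Function.id_comp] at h
  -- G invertible with G * N = B
  have hker : LinearMap.ker N.mulVecLin = LinearMap.ker B.mulVecLin :=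
    Matrix.ker_mulVecLin_conjTranspose_mul_self B
  obtain ⟨e, he⟩ := exists_linearEquiv_comp_eq N.mulVecLin B.mulVecLin hker
  set G : Matrix (Fin 3) (Fin 3) ℝ := LinearMap.toMatrix' e.toLinearMap with hGdef
  set G' : Matrix (Fin 3) (Fin 3) ℝ := LinearMap.toMatrix' e.symm.toLinearMap with hG'def
  have hGG' : G * G' = 1 := by
    rw [hGdef, hG'def, ← LinearMap.toMatrix'_comp]
    rw [show (e.toLinearMap ∘ₗ e.symm.toLinearMap) = LinearMap.id by ext x; simp]
    exact LinearMap.toMatrix'_id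
  have hG'G : G' * G = 1 := by
    rw [hGdef, hG'def, ← LinearMap.toMatrix'_comp]
    rw [show (e.symm.toLinearMap ∘ₗ e.toLinearMap) = LinearMap.id by ext x; simp]
    exact LinearMap.toMatrix'_id
  have hGmulVec : ∀ v : Fin 3 → ℝ, G *ᵥ v = e v := by
    intro v
    rw [hGdef, ← Matrix.toLin'_apply, Matrix.toLin'_toMatrix']
    rfl
  have hGN : G * N = B := by
    ext i j
    have h1 : (G * N) *ᵥ (Pi.single j 1) = B *ᵥ (Pi.single j 1) := by
      rw [← Matrix.mulVec_mulVec, hGmulVec]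
      have := he (Pi.single j 1)
      simpa [Matrix.mulVecLin_apply] using this
    have h2 := congrFun h1 i
    simpa [Matrix.mulVec_single, MulOpposite.op_one] using h2
  -- combined data
  set c : Fin 3 → ℝ := fun j => if d j = 0 then 1 else d j with hc
  set ind : Fin 3 → ℝ := fun j => if d j = 0 then 0 else 1 with hind
  have hcne : ∀ j, c j ≠ 0 := by
    intro j
    rw [hc]
    by_cases h : d j = 0 <;> simp [h]
  -- collapsing lemmas
  have hUdW : ∀ φ ψ : Fin 3 → ℝ,
      (U * Matrix.diagonal φ * W) * (U * Matrix.diagonal ψ * W) =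
        U * Matrix.diagonal (fun j => φ j * ψ j) * W := by
    intro φ ψ
    rw [show (U * Matrix.diagonal φ * W) * (U * Matrix.diagonal ψ * W) =
      U * Matrix.diagonal φ * (W * U) * Matrix.diagonal ψ * W by
        simp only [Matrix.mul_assoc], hWU, Matrix.mul_one]
    rw [show U * Matrix.diagonal φ * Matrix.diagonal ψ * W =
      U * (Matrix.diagonal φ * Matrix.diagonal ψ) * W by simp only [Matrix.mul_assoc],
      Matrix.diagonal_mul_diagonal]
  have collapse : ∀ φ ψ : Fin 3 → ℝ,
      (U * Matrix.diagonal φ * W * G') * (G * (U * Matrix.diagonal ψ * W)) =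
        U * Matrix.diagonal (fun j => φ j * ψ j) * W := by
    intro φ ψ
    rw [show (U * Matrix.diagonal φ * W * G') * (G * (U * Matrix.diagonal ψ * W)) =
      U * Matrix.diagonal φ * W * (G' * G) * (U * Matrix.diagonal ψ * W) by
        simp only [Matrix.mul_assoc], hG'G, Matrix.mul_one, hUdW]
  have collapse2 : ∀ φ ψ : Fin 3 → ℝ,
      (G * (U * Matrix.diagonal φ * W)) * (U * Matrix.diagonal ψ * W * G') =
        G * (U * Matrix.diagonal (fun j => φ j * ψ j) * W) * G' := by
    intro φ ψ
    rw [show (G * (U * Matrix.diagonal φ * W)) * (U * Matrix.diagonal ψ * W * G') =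
      G * ((U * Matrix.diagonal φ * W) * (U * Matrix.diagonal ψ * W)) * G' by
        simp only [Matrix.mul_assoc], hUdW]
  have hone : ∀ φ : Fin 3 → ℝ, (∀ j, φ j = 1) →
      U * Matrix.diagonal φ * W = 1 := by
    intro φ hφ
    rw [show φ = fun _ => (1:ℝ) from funext hφ, Matrix.diagonal_one, Matrix.mul_one, hUW]
  have hBfact : B = G * (U * Matrix.diagonal d * W) := by rw [← hGN, hspec, Matrix.mul_assoc]
  -- conjugation computations
  have conj_eq : ∀ (φ ψ : Fin 3 → ℝ) (Y : Matrix (Fin 3) (Fin 3) ℝ),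
      (U * Matrix.diagonal φ * W * G') * (G * (U * Matrix.diagonal d * W) * Y - 1) *
        (G * (U * Matrix.diagonal ψ * W)) =
      U * Matrix.diagonal (fun j => φ j * d j) * W * Y * (G * (U * Matrix.diagonal ψ * W)) -
        U * Matrix.diagonal (fun j => φ j * ψ j) * W := by
    intro φ ψ Y
    rw [Matrix.mul_sub, Matrix.sub_mul, Matrix.mul_one]
    congr 1
    · rw [show (U * Matrix.diagonal φ * W * G') * (G * (U * Matrix.diagonal d * W) * Y) =
        ((U * Matrix.diagonal φ * W * G') * (G * (U * Matrix.diagonal d * W))) * Y by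
          simp only [Matrix.mul_assoc], collapse]
    · exact collapse φ ψ
  have conj_eq2 : ∀ (φ ψ : Fin 3 → ℝ) (Y : Matrix (Fin 3) (Fin 3) ℝ),
      (U * Matrix.diagonal φ * W) * (Y * (G * (U * Matrix.diagonal d * W)) - 1) *
        (U * Matrix.diagonal ψ * W) =
      U * Matrix.diagonal φ * W * Y * (G * (U * Matrix.diagonal (fun j => d j * ψ j) * W)) -
        U * Matrix.diagonal (fun j => φ j * ψ j) * W := by
    intro φ ψ Y
    rw [Matrix.mul_sub, Matrix.sub_mul, Matrix.mul_one]
    congr 1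
    · rw [show (U * Matrix.diagonal φ * W) * (Y * (G * (U * Matrix.diagonal d * W))) *
        (U * Matrix.diagonal ψ * W) =
        U * Matrix.diagonal φ * W * Y *
          (G * ((U * Matrix.diagonal d * W) * (U * Matrix.diagonal ψ * W))) by
          simp only [Matrix.mul_assoc], hUdW]
    · exact hUdW φ ψ
  -- filter and scalar limits
  set l : Filter ℝ := nhdsWithin 0 (Set.Ioi 0) with hl
  have hbase : ∀ j : Fin 3, Tendsto (fun s : ℝ => d j + s) l (𝓝 (d j)) := by
    intro j
    have h1 : Tendsto (fun s : ℝ => d j + s) (𝓝 0) (𝓝 (d j + 0)) :=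
      (continuous_const.add continuous_id).tendsto 0
    rw [add_zero] at h1
    exact h1.mono_left nhdsWithin_le_nhds
  have hφσ : ∀ j, Tendsto (fun s : ℝ => c j * (d j + s)⁻¹ * d j) l (𝓝 (d j)) := by
    intro j
    by_cases hj : d j = 0
    · rw [hj]
      simpa using (tendsto_const_nhds : Tendsto (fun _ : ℝ => (0:ℝ)) l (𝓝 0))
    · have h1 : Tendsto (fun s : ℝ => (d j + s)⁻¹) l (𝓝 (d j)⁻¹) := (hbase j).inv₀ hj
      have h2 := ((tendsto_const_nhds : Tendsto (fun _ : ℝ => c j) l (𝓝 (c j))).mul h1).mul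
        (tendsto_const_nhds : Tendsto (fun _ : ℝ => d j) l (𝓝 (d j)))
      have h3 : c j * (d j)⁻¹ * d j = d j := by
        rw [hc]
        simp only [if_neg hj]
        field_simp
      simpa [h3] using h2
  have hψσ : ∀ j, Tendsto (fun s : ℝ => (d j + s) * (c j)⁻¹) l (𝓝 (ind j)) := by
    intro j
    have h2 := (hbase j).mul (tendsto_const_nhds : Tendsto (fun _ : ℝ => (c j)⁻¹) l (𝓝 (c j)⁻¹))
    have h3 : d j * (c j)⁻¹ = ind j := by
      rw [hc, hind]
      by_cases hj : d j = 0
      · simp [hj]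
      · simp only [if_neg hj]
        field_simp
    simpa [h3] using h2
  have hψτ : ∀ j, Tendsto (fun s : ℝ => d j * (d j + s)⁻¹) l (𝓝 (ind j)) := by
    intro j
    by_cases hj : d j = 0
    · rw [hind]
      simp only [hj, if_pos]
      simpa using (tendsto_const_nhds : Tendsto (fun _ : ℝ => (0:ℝ)) l (𝓝 0))
    · have h1 : Tendsto (fun s : ℝ => (d j + s)⁻¹) l (𝓝 (d j)⁻¹) := (hbase j).inv₀ hj
      have h2 := (tendsto_const_nhds : Tendsto (fun _ : ℝ => d j) l (𝓝 (d j))).mul h1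
      have h3 : d j * (d j)⁻¹ = ind j := by
        rw [hind]
        simp only [if_neg hj]
        field_simp
      simpa [h3] using h2
  -- the master tendsto lemma
  have key_tendsto : ∀ (i : Fin 3) (φ ψ : ℝ → Fin 3 → ℝ) (φ0 ψ0 : Fin 3 → ℝ),
      (∀ j, Tendsto (fun s => φ s j) l (𝓝 (φ0 j))) →
      (∀ j, Tendsto (fun s => ψ s j) l (𝓝 (ψ0 j))) →
      Tendsto (fun s => U * Matrix.diagonal (φ s) * W * X i *
          (G * (U * Matrix.diagonal (ψ s) * W)) - 1) l
        (𝓝 (U * Matrix.diagonal φ0 * W * X i *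
          (G * (U * Matrix.diagonal ψ0 * W)) - 1)) := by
    intro i φ ψ φ0 ψ0 hφ hψ
    have h1 := tendsto_diagonal_mat hφ
    have h2 := tendsto_diagonal_mat hψ
    exact ((((tendsto_const_nhds.mul h1).mul tendsto_const_nhds).mul
      tendsto_const_nhds).mul (tendsto_const_nhds.mul
        ((tendsto_const_nhds.mul h2).mul tendsto_const_nhds))).sub tendsto_const_nhds
  -- the common point
  set Z : Fin 3 → Matrix (Fin 3) (Fin 3) ℝ := fun i =>
    U * Matrix.diagonal d * W * X i * (G * (U * Matrix.diagonal ind * W)) - 1 with hZ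
  refine ⟨(Z 0, Z 1, Z 2), ?_, ?_⟩
  · -- σ side
    refine mem_closure_of_tendsto (f := fun s : ℝ =>
      (U * Matrix.diagonal (fun j => c j * (d j + s)⁻¹ * d j) * W * X 0 *
          (G * (U * Matrix.diagonal (fun j => (d j + s) * (c j)⁻¹) * W)) - 1,
       U * Matrix.diagonal (fun j => c j * (d j + s)⁻¹ * d j) * W * X 1 *
          (G * (U * Matrix.diagonal (fun j => (d j + s) * (c j)⁻¹) * W)) - 1,
       U * Matrix.diagonal (fun j => c j * (d j + s)⁻¹ * d j) * W * X 2 *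
          (G * (U * Matrix.diagonal (fun j => (d j + s) * (c j)⁻¹) * W)) - 1))
      (b := l) ?_ ?_
    · exact ((key_tendsto 0 _ _ _ _ hφσ hψσ).prodMk_nhds
        ((key_tendsto 1 _ _ _ _ hφσ hψσ).prodMk_nhds (key_tendsto 2 _ _ _ _ hφσ hψσ)))
    · filter_upwards [self_mem_nhdsWithin] with s hs
      have hs' : (0:ℝ) < s := hs
      have hdsne : ∀ j, d j + s ≠ 0 := fun j => ne_of_gt (by have := hd0 j; linarith)
      refine ⟨⟨U * Matrix.diagonal (fun j => c j * (d j + s)⁻¹) * W * G',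
        G * (U * Matrix.diagonal (fun j => (d j + s) * (c j)⁻¹) * W), ?_, ?_⟩, ?_⟩
      · rw [collapse]
        exact hone _ (fun j => by
          rw [show c j * (d j + s)⁻¹ * ((d j + s) * (c j)⁻¹)
            = (c j * (c j)⁻¹) * ((d j + s) * (d j + s)⁻¹) from by ring,
            mul_inv_cancel₀ (hcne j), mul_inv_cancel₀ (hdsne j), one_mul])
      · rw [collapse2, hone _ (fun j => by
          rw [show (d j + s) * (c j)⁻¹ * (c j * (d j + s)⁻¹)
            = (c j * (c j)⁻¹) * ((d j + s) * (d j + s)⁻¹) from by ring,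
            mul_inv_cancel₀ (hcne j), mul_inv_cancel₀ (hdsne j), one_mul]),
          Matrix.mul_one, hGG']
      · have hcomp : ∀ i : Fin 3,
            (U * Matrix.diagonal (fun j => c j * (d j + s)⁻¹) * W * G') * σ i *
              (G * (U * Matrix.diagonal (fun j => (d j + s) * (c j)⁻¹) * W)) =
            U * Matrix.diagonal (fun j => c j * (d j + s)⁻¹ * d j) * W * X i *
              (G * (U * Matrix.diagonal (fun j => (d j + s) * (c j)⁻¹) * W)) - 1 := by
          intro i
          rw [hσ' i, hBfact, conj_eq,
            show U * Matrix.diagonal (fun j => (fun j => c j * (d j + s)⁻¹) j *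
                ((fun j => (d j + s) * (c j)⁻¹) j)) * W = 1 from hone _ (fun j => by
              rw [show c j * (d j + s)⁻¹ * ((d j + s) * (c j)⁻¹)
                = (c j * (c j)⁻¹) * ((d j + s) * (d j + s)⁻¹) from by ring,
                mul_inv_cancel₀ (hcne j), mul_inv_cancel₀ (hdsne j), one_mul])]
        exact Prod.ext (by exact (hcomp 0).symm)
          (Prod.ext (by exact (hcomp 1).symm) (by exact (hcomp 2).symm))
  · -- τ side
    refine mem_closure_of_tendsto (f := fun s : ℝ =>
      (U * Matrix.diagonal (fun j => d j + s) * W * X 0 *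
          (G * (U * Matrix.diagonal (fun j => d j * (d j + s)⁻¹) * W)) - 1,
       U * Matrix.diagonal (fun j => d j + s) * W * X 1 *
          (G * (U * Matrix.diagonal (fun j => d j * (d j + s)⁻¹) * W)) - 1,
       U * Matrix.diagonal (fun j => d j + s) * W * X 2 *
          (G * (U * Matrix.diagonal (fun j => d j * (d j + s)⁻¹) * W)) - 1))
      (b := l) ?_ ?_
    · exact ((key_tendsto 0 _ _ _ _ hbase hψτ).prodMk_nhds
        ((key_tendsto 1 _ _ _ _ hbase hψτ).prodMk_nhds (key_tendsto 2 _ _ _ _ hbase hψτ)))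
    · filter_upwards [self_mem_nhdsWithin] with s hs
      have hs' : (0:ℝ) < s := hs
      have hdsne : ∀ j, d j + s ≠ 0 := fun j => ne_of_gt (by have := hd0 j; linarith)
      refine ⟨⟨U * Matrix.diagonal (fun j => d j + s) * W,
        U * Matrix.diagonal (fun j => (d j + s)⁻¹) * W, ?_, ?_⟩, ?_⟩
      · rw [hUdW]
        exact hone _ (fun j => mul_inv_cancel₀ (hdsne j))
      · rw [hUdW]
        exact hone _ (fun j => inv_mul_cancel₀ (hdsne j))
      · have hcomp : ∀ i : Fin 3,
            (U * Matrix.diagonal (fun j => d j + s) * W) * τ i *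
              (U * Matrix.diagonal (fun j => (d j + s)⁻¹) * W) =
            U * Matrix.diagonal (fun j => d j + s) * W * X i *
              (G * (U * Matrix.diagonal (fun j => d j * (d j + s)⁻¹) * W)) - 1 := by
          intro i
          rw [hτ' i, hBfact, conj_eq2,
            show U * Matrix.diagonal (fun j => (fun j => d j + s) j *
                ((fun j => (d j + s)⁻¹) j)) * W = 1 from
              hone _ (fun j => mul_inv_cancel₀ (hdsne j))]
        exact Prod.ext (by exact (hcomp 0).symm)
          (Prod.ext (by exact (hcomp 1).symm) (by exact (hcomp 2).symm))
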